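/- arXiv:1501.01014 — 2 statements merged into one kernel-verified Lean document; each statement's English description precedes it below -/
import Mathlib

section
/- For every real y with |y| < h_b, the quantum dilogarithm tends to 1 along the left end of the strip: lim_{x → −∞, x ∈ ℝ} Φ_b(x + iy) = 1. -/
open MeasureTheory Filter Real

/-- Faddeev's quantum dilogarithm, defined on the strip `|Im z| < (b + b⁻¹)/2`
via the contour integral with regularization parameter `ε`,
`0 < ε < π * min b b⁻¹`. -/
noncomputable def Phib (b ε : ℝ) (z : ℂ) : ℂ :=
  Complex.exp (∫ t : ℝ,
    Complex.exp (-2 * Complex.I * z * ((t : ℂ) + Complex.I * (ε : ℂ))) /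
      (4 * Complex.sinh ((b : ℂ) * ((t : ℂ) + Complex.I * (ε : ℂ))) *
        Complex.sinh ((b : ℂ)⁻¹ * ((t : ℂ) + Complex.I * (ε : ℂ))) *
        ((t : ℂ) + Complex.I * (ε : ℂ))))

/-- The function `Ψ_{a,c}(x) = e^{2πax} / Φ_b(x − i(a+c))`. -/
noncomputable def Psi (b ε a c : ℝ) (x : ℝ) : ℂ :=
  Complex.exp (2 * (Real.pi : ℂ) * (a : ℂ) * (x : ℂ)) /
    Phib b ε ((x : ℂ) - Complex.I * ((a : ℂ) + (c : ℂ)))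

/-- The normalized quantum dilogarithm `φ_b(z) = Φ_b(z) e^{−πiz²/2} e^{−πi(b²+b⁻²)/24}`. -/
noncomputable def phib (b ε : ℝ) (z : ℂ) : ℂ :=
  Phib b ε z * Complex.exp (-(Real.pi : ℂ) * Complex.I * z ^ 2 / 2) *
    Complex.exp (-(Real.pi : ℂ) * Complex.I * ((b : ℂ) ^ 2 + (b : ℂ)⁻¹ ^ 2) / 24)

theorem Phib_integral_tendsto_zero_aux (b ε : ℝ) (hb : 0 < b)
    (hε0 : 0 < ε) (hε : ε < π * min b b⁻¹)
    (y : ℝ) (hy : |y| < (b + b⁻¹) / 2) :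
    Tendsto (fun x : ℝ => ∫ t : ℝ,
      Complex.exp (-2 * Complex.I * ((x:ℂ) + Complex.I * (y:ℂ)) * ((t:ℂ) + Complex.I * ε)) /
        (4 * Complex.sinh ((b:ℂ) * ((t:ℂ) + Complex.I * ε)) *
          Complex.sinh ((b:ℂ)⁻¹ * ((t:ℂ) + Complex.I * ε)) * ((t:ℂ) + Complex.I * ε)))
      atBot (nhds 0) := by
  set D : ℝ → ℂ := fun t => 4 * Complex.sinh ((b:ℂ) * ((t:ℂ) + Complex.I * ε)) *
      Complex.sinh ((b:ℂ)⁻¹ * ((t:ℂ) + Complex.I * ε)) * ((t:ℂ) + Complex.I * ε) with hD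
  set h : ℝ → ℂ := fun t =>
      Complex.exp (-2 * Complex.I * (Complex.I * (y:ℂ)) * ((t:ℂ) + Complex.I * ε)) / D t with hh
  have hsplit : ∀ (x t : ℝ),
      Complex.exp (-2 * Complex.I * ((x:ℂ) + Complex.I * (y:ℂ)) * ((t:ℂ) + Complex.I * ε)) / D t
        = Complex.exp (-2 * Complex.I * (x:ℂ) * ((t:ℂ) + Complex.I * ε)) * h t := by
    intro x t
    rw [hh]
    rw [show -2 * Complex.I * ((x:ℂ) + Complex.I * (y:ℂ)) * ((t:ℂ) + Complex.I * ε)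
        = -2 * Complex.I * (x:ℂ) * ((t:ℂ) + Complex.I * ε)
          + -2 * Complex.I * (Complex.I * (y:ℂ)) * ((t:ℂ) + Complex.I * ε) by ring,
      Complex.exp_add, mul_div_assoc]
  have hnorm : ∀ (x t : ℝ),
      ‖Complex.exp (-2 * Complex.I * (x:ℂ) * ((t:ℂ) + Complex.I * ε))‖ = Real.exp (2 * x * ε) := by
    intro x t
    rw [Complex.norm_exp]
    congr 1
    simp [Complex.mul_re, Complex.mul_im]
  have hexp0 : Tendsto (fun x : ℝ => Real.exp (2 * x * ε)) atBot (nhds 0) := by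
    apply Real.tendsto_exp_atBot.comp
    apply Tendsto.atBot_mul_const hε0
    exact (tendsto_id.const_mul_atBot (by norm_num : (0:ℝ) < 2))
  by_cases hi : Integrable h
  · refine squeeze_zero_norm (f := fun x : ℝ => ∫ t : ℝ,
        Complex.exp (-2 * Complex.I * ((x:ℂ) + Complex.I * (y:ℂ)) * ((t:ℂ) + Complex.I * ε)) / D t)
        (a := fun x : ℝ => Real.exp (2 * x * ε) * ∫ t : ℝ, ‖h t‖) (fun x => ?_) ?_
    · calc ‖∫ t : ℝ, Complex.exp (-2 * Complex.I * ((x:ℂ) + Complex.I * (y:ℂ)) *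
              ((t:ℂ) + Complex.I * ε)) / D t‖
          ≤ ∫ t : ℝ, ‖Complex.exp (-2 * Complex.I * ((x:ℂ) + Complex.I * (y:ℂ)) *
              ((t:ℂ) + Complex.I * ε)) / D t‖ := norm_integral_le_integral_norm _
        _ = ∫ t : ℝ, Real.exp (2 * x * ε) * ‖h t‖ := by
            congr 1; funext t; rw [hsplit, norm_mul, hnorm]
        _ = Real.exp (2 * x * ε) * ∫ t : ℝ, ‖h t‖ := integral_const_mul _ _
    · simpa using hexp0.mul_const (∫ t : ℝ, ‖h t‖)
  · have hnot : ∀ x : ℝ, ¬ Integrable (fun t : ℝ =>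
        Complex.exp (-2 * Complex.I * ((x:ℂ) + Complex.I * (y:ℂ)) *
          ((t:ℂ) + Complex.I * ε)) / D t) := by
      intro x hx
      apply hi
      have heq : h = fun t : ℝ =>
          Complex.exp (2 * Complex.I * (x:ℂ) * ((t:ℂ) + Complex.I * ε)) *
            (Complex.exp (-2 * Complex.I * ((x:ℂ) + Complex.I * (y:ℂ)) *
              ((t:ℂ) + Complex.I * ε)) / D t) := by
        funext t
        rw [hsplit, ← mul_assoc, ← Complex.exp_add,
          show 2 * Complex.I * (x:ℂ) * ((t:ℂ) + Complex.I * ε)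
            + -2 * Complex.I * (x:ℂ) * ((t:ℂ) + Complex.I * ε) = 0 by ring,
          Complex.exp_zero, one_mul]
      rw [heq]
      apply hx.bdd_mul (c := Real.exp (-2 * x * ε))
      · exact (Complex.continuous_exp.comp (by continuity)).aestronglyMeasurable
      · refine Filter.Eventually.of_forall (fun t => ?_)
        rw [Complex.norm_exp]
        apply le_of_eq
        congr 1
        simp [Complex.mul_re, Complex.mul_im]
    simp +zetaDelta only [integral_undef (hnot _)]
    exact tendsto_const_nhds

/-- `Φ_b(x + iy) → 1` as `x → −∞`, for any fixed `y` with `|y| < h_b`. -/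
theorem Phib_tendsto_one_atBot (b ε : ℝ) (hb : 0 < b)
    (hε0 : 0 < ε) (hε : ε < π * min b b⁻¹)
    (y : ℝ) (hy : |y| < (b + b⁻¹) / 2) :
    Tendsto (fun x : ℝ => Phib b ε ((x : ℂ) + Complex.I * (y : ℂ))) atBot (nhds 1) := by
  have key := Phib_integral_tendsto_zero_aux b ε hb hε0 hε y hy
  have h1 : (1:ℂ) = Complex.exp 0 := by simp
  rw [h1]
  have h2 := (Complex.continuous_exp.tendsto 0).comp key
  simpa [Phib, Function.comp_def] using h2
end

section
/- Let L ≥ 1 be an integer, let f ∈ L¹(ℝ) and let G : ℝ → ℂ be a bounded measurable function. With the cyclic convention x_{L+1} = x₁ and y_{L+1} = y₁, one has ∫_{ℝ^L} ∏_{j=1}^{L} f(x_j) · G(x_{j+1} − x_j) dx₁⋯dx_L = L · ∫_{ℝ^{L−1}} J_f(y₁, …, y_{L−1}, y_L) · ∏_{j=1}^{L} G(y_{j+1} − y_j) dy₁⋯dy_{L−1}, where y_L := −(y₁ + ⋯ + y_{L−1}) and J_f(x₁, …, x_L) := ∫_ℝ ∏_{j=1}^{L} f(x_j + t) dt. -/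
open MeasureTheory Real

lemma castSucc_ne_last {L : ℕ} (i : Fin L) : (i.castSucc : Fin (L+1)) ≠ Fin.last L :=
  (Fin.castSucc_lt_last i).ne

noncomputable def mapB (L : ℕ) : (Fin (L+1) → ℝ) →ₗ[ℝ] (Fin (L+1) → ℝ) where
  toFun z := fun j => z j + if j = Fin.last L then 0 else z (Fin.last L)
  map_add' x y := by funext j; by_cases h : j = Fin.last L <;> simp [h] <;> ring
  map_smul' c x := by funext j; by_cases h : j = Fin.last L <;> simp [h] <;> ring

noncomputable def mapA (L : ℕ) : (Fin (L+1) → ℝ) →ₗ[ℝ] (Fin (L+1) → ℝ) where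
  toFun w := fun j => if j = Fin.last L then
      ((L:ℝ)+1) * w (Fin.last L) - ∑ i : Fin L, w i.castSucc else w j
  map_add' x y := by
    funext j; by_cases h : j = Fin.last L <;> simp [h, Finset.sum_add_distrib] <;> ring
  map_smul' c x := by
    funext j; by_cases h : j = Fin.last L <;>
      simp [h, ← Finset.mul_sum] <;> ring

noncomputable def mapS (L : ℕ) : (Fin (L+1) → ℝ) →ₗ[ℝ] (Fin (L+1) → ℝ) :=
  (mapA L).comp (mapB L)

lemma mapS_apply (L : ℕ) (z : Fin (L+1) → ℝ) (j : Fin (L+1)) :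
    mapS L z j = if j = Fin.last L then
      z (Fin.last L) - ∑ i : Fin L, z i.castSucc else z j + z (Fin.last L) := by
  simp only [mapS, LinearMap.comp_apply, mapA, mapB, LinearMap.coe_mk, AddHom.coe_mk]
  by_cases h : j = Fin.last L
  · simp only [h, if_pos rfl]
    have hne : ∀ i : Fin L, ¬ ((i.castSucc : Fin (L+1)) = Fin.last L) :=
      fun i => castSucc_ne_last i
    simp only [hne, if_false, Finset.sum_add_distrib, Finset.sum_const,
      Finset.card_univ, Fintype.card_fin, nsmul_eq_mul]
    push_cast
    ring
  · simp [h]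

lemma det_mapB (L : ℕ) : LinearMap.det (mapB L) = 1 := by
  rw [← LinearMap.det_toMatrix', Matrix.det_of_upperTriangular]
  · apply Finset.prod_eq_one
    intro i _
    by_cases h : i = Fin.last L
    · simp [LinearMap.toMatrix'_apply, mapB, h]
    · simp [LinearMap.toMatrix'_apply, mapB, h]
  · intro i j hij
    have h1 : i ≠ j := (ne_of_lt hij).symm
    have h2 : Fin.last L ≠ j := (lt_of_lt_of_le hij (Fin.le_last i)).ne'
    simp [LinearMap.toMatrix'_apply, mapB, h1, h2]

lemma det_mapA (L : ℕ) : LinearMap.det (mapA L) = (L:ℝ)+1 := by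
  rw [← LinearMap.det_toMatrix', Matrix.det_of_lowerTriangular]
  · rw [Fin.prod_univ_castSucc]
    have h1 : ∀ i : Fin L,
        (LinearMap.toMatrix' (mapA L)) i.castSucc i.castSucc = 1 := by
      intro i
      simp [LinearMap.toMatrix'_apply, mapA, castSucc_ne_last i]
    have h2 : (LinearMap.toMatrix' (mapA L)) (Fin.last L) (Fin.last L) = (L:ℝ)+1 := by
      simp [LinearMap.toMatrix'_apply, mapA, fun i : Fin L => castSucc_ne_last i]
    simp [h1, h2]
  · intro i j hij
    have hij' : i < j := hij
    have h1 : i ≠ Fin.last L := (lt_of_lt_of_le hij' (Fin.le_last j)).ne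
    have h2 : ¬ (i = j) := (ne_of_lt hij')
    simp [LinearMap.toMatrix'_apply, mapA, h1, h2]

lemma det_mapS (L : ℕ) : LinearMap.det (mapS L) = (L:ℝ)+1 := by
  rw [mapS, LinearMap.det_comp, det_mapA, det_mapB, mul_one]

lemma mapS_snoc (L : ℕ) (y : Fin L → ℝ) (t : ℝ) :
    mapS L (Fin.snoc y t) =
      fun j => (Fin.snoc y (-(∑ i : Fin L, y i)) : Fin (L+1) → ℝ) j + t := by
  funext j
  rw [mapS_apply]
  by_cases h : j = Fin.last L
  · subst h
    simp [Fin.snoc_last, Fin.snoc_castSucc]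
    ring
  · have h2 := h
    induction j using Fin.lastCases with
    | last => exact absurd rfl h
    | cast i => simp [Fin.snoc_castSucc, castSucc_ne_last i]

theorem key (L : ℕ) (f G : ℝ → ℂ) (hfm : StronglyMeasurable f)
    (hf : Integrable f (volume : Measure ℝ)) (hG : Measurable G)
    (M : ℝ) (hM : ∀ x : ℝ, ‖G x‖ ≤ M) :
    (∫ x : Fin (L + 1) → ℝ, ∏ j : Fin (L + 1), f (x j) * G (x (j + 1) - x j)) =
      ((L : ℂ) + 1) * ∫ y : Fin L → ℝ,
        (∫ t : ℝ, ∏ j : Fin (L + 1),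
            f ((Fin.snoc y (-(∑ i : Fin L, y i)) : Fin (L + 1) → ℝ) j + t)) *
          ∏ j : Fin (L + 1),
            G ((Fin.snoc y (-(∑ i : Fin L, y i)) : Fin (L + 1) → ℝ) (j + 1) -
               (Fin.snoc y (-(∑ i : Fin L, y i)) : Fin (L + 1) → ℝ) j) := by
  have hfmeas : Measurable f := hfm.measurable
  set P : (Fin (L+1) → ℝ) → ℂ :=
    fun x => ∏ j : Fin (L+1), f (x j) * G (x (j + 1) - x j) with hPdef
  have hPm : Measurable P := by
    apply Finset.measurable_prod
    intro j _
    exact (hfmeas.comp (measurable_pi_apply j)).mul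
      (hG.comp ((measurable_pi_apply (j+1)).sub (measurable_pi_apply j)))
  have hM0 : 0 ≤ M := le_trans (norm_nonneg _) (hM 0)
  have hPeq : P = fun x => (∏ j : Fin (L+1), G (x (j + 1) - x j)) *
      ∏ j : Fin (L+1), f (x j) := by
    funext x
    simp only [hPdef]
    rw [Finset.prod_mul_distrib, mul_comm]
  have hfprod : Integrable (fun x : Fin (L+1) → ℝ => ∏ j, f (x j)) :=
    Integrable.fintype_prod (f := fun _ : Fin (L+1) => f) (fun _ => hf)
  have hPint : Integrable P := by
    rw [hPeq]
    apply Integrable.bdd_mul (c := M ^ (L+1)) hfprod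
    · exact (Finset.measurable_prod _ fun j _ =>
        hG.comp ((measurable_pi_apply (j+1)).sub (measurable_pi_apply j))).aestronglyMeasurable
    · refine Filter.Eventually.of_forall fun x => ?_
      calc ‖∏ j : Fin (L+1), G (x (j + 1) - x j)‖
          = ∏ j : Fin (L+1), ‖G (x (j + 1) - x j)‖ := by rw [norm_prod]
        _ ≤ ∏ _j : Fin (L+1), M :=
            Finset.prod_le_prod (fun _ _ => norm_nonneg _) (fun j _ => hM _)
        _ = M ^ (L+1) := by simp
  -- change of variables via mapS
  have hdetne : LinearMap.det (mapS L) ≠ 0 := by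
    rw [det_mapS]; positivity
  have hmap := Real.map_linearMap_volume_pi_eq_smul_volume_pi hdetne
  rw [det_mapS] at hmap
  have habs : |((L:ℝ)+1)⁻¹| = ((L:ℝ)+1)⁻¹ :=
    abs_of_nonneg (by positivity)
  rw [habs] at hmap
  have hSmeas : Measurable (mapS L) :=
    (LinearMap.continuous_of_finiteDimensional (mapS L)).measurable
  have hPScomp : Integrable (fun z => P (mapS L z)) := by
    have h1 : Integrable P (Measure.map (mapS L) volume) := by
      rw [hmap]
      exact hPint.smul_measure ENNReal.ofReal_ne_top
    exact (integrable_map_measure hPm.aestronglyMeasurable hSmeas.aemeasurable).1 h1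
  have hCoV : ∫ x, P x = ((L:ℝ)+1) • ∫ z, P (mapS L z) := by
    have h2 : ∫ z, P (mapS L z) = ∫ x, P x ∂(Measure.map (mapS L) volume) :=
      (integral_map hSmeas.aemeasurable hPm.aestronglyMeasurable).symm
    rw [hmap, integral_smul_measure, ENNReal.toReal_ofReal (by positivity)] at h2
    rw [h2, smul_smul, mul_inv_cancel₀ (by positivity), one_smul]
  -- pi → prod
  set e := MeasurableEquiv.piFinSuccAbove (fun _ : Fin (L+1) => ℝ) (Fin.last L) with hedef
  have hmpe : MeasurePreserving e.symm
      (volume : Measure (ℝ × (Fin L → ℝ))) (volume : Measure (Fin (L+1) → ℝ)) :=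
    (volume_preserving_piFinSuccAbove (fun _ : Fin (L+1) => ℝ) (Fin.last L)).symm
  have hsymm : ∀ p : ℝ × (Fin L → ℝ), e.symm p = Fin.snoc p.2 p.1 := by
    intro p
    show (Fin.insertNthEquiv (fun _ : Fin (L+1) => ℝ) (Fin.last L)) p = _
    simp [Fin.insertNthEquiv, Fin.insertNth_last']
  have step2 : ∫ z, P (mapS L z) = ∫ p : ℝ × (Fin L → ℝ), P (mapS L (Fin.snoc p.2 p.1)) := by
    rw [← hmpe.integral_comp' (fun z => P (mapS L z))]
    congr 1
    funext p
    rw [hsymm]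
  have hQint : Integrable (fun p : ℝ × (Fin L → ℝ) => P (mapS L (Fin.snoc p.2 p.1)))
      ((volume : Measure ℝ).prod (volume : Measure (Fin L → ℝ))) := by
    have := (hmpe.integrable_comp_emb (MeasurableEquiv.measurableEmbedding e.symm)).2 hPScomp
    refine this.congr (Filter.Eventually.of_forall fun p => ?_)
    simp only [Function.comp_apply, hsymm]
  have hprod : ∫ p : ℝ × (Fin L → ℝ), P (mapS L (Fin.snoc p.2 p.1))
      = ∫ y : Fin L → ℝ, ∫ t : ℝ, P (mapS L (Fin.snoc y t)) := by
    have := integral_prod_symm (fun p : ℝ × (Fin L → ℝ) => P (mapS L (Fin.snoc p.2 p.1))) hQint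
    rw [Measure.volume_eq_prod]
    simpa using this
  have hpt : ∀ (y : Fin L → ℝ) (t : ℝ), P (mapS L (Fin.snoc y t)) =
      (∏ j : Fin (L+1), f ((Fin.snoc y (-(∑ i : Fin L, y i)) : Fin (L+1) → ℝ) j + t)) *
      ∏ j : Fin (L+1),
          G ((Fin.snoc y (-(∑ i : Fin L, y i)) : Fin (L+1) → ℝ) (j + 1) -
             (Fin.snoc y (-(∑ i : Fin L, y i)) : Fin (L+1) → ℝ) j) := by
    intro y t
    simp only [hPdef, mapS_snoc]
    rw [Finset.prod_mul_distrib]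
    congr 1
    apply Finset.prod_congr rfl
    intro j _
    congr 1
    ring
  calc (∫ x : Fin (L + 1) → ℝ, ∏ j : Fin (L + 1), f (x j) * G (x (j + 1) - x j))
      = ∫ x, P x := rfl
    _ = ((L:ℝ)+1) • ∫ z, P (mapS L z) := hCoV
    _ = ((L:ℝ)+1) • ∫ y : Fin L → ℝ, ∫ t : ℝ, P (mapS L (Fin.snoc y t)) := by
        rw [step2, hprod]
    _ = _ := by
        rw [Complex.real_smul]
        push_cast
        congr 1
        apply integral_congr_ae
        apply Filter.Eventually.of_forall
        intro y
        simp_rw [hpt y]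
        rw [integral_mul_const]

/-- Reduction of a cyclic `L`-dimensional trace integral to an `(L−1)`-dimensional one
(stated with `L + 1` variables, `L : ℕ`, so that the number of variables is `≥ 1`):
`∫_{ℝ^L} ∏_j f(x_j)·G(x_{j+1} − x_j) dx = L·∫_{ℝ^{L−1}} J_f(y)·∏_j G(y_{j+1} − y_j) dy`,
where the last coordinate of `y` is `−(y₁ + ⋯ + y_{L−1})`, indices are cyclic, and
`J_f(x₁,…,x_L) = ∫ ∏_j f(x_j + t) dt`. -/
theorem cyclic_trace_integral (L : ℕ) (f G : ℝ → ℂ)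
    (hf : Integrable f (volume : Measure ℝ)) (hG : Measurable G)
    (hGbd : ∃ M : ℝ, ∀ x : ℝ, ‖G x‖ ≤ M) :
    (∫ x : Fin (L + 1) → ℝ, ∏ j : Fin (L + 1), f (x j) * G (x (j + 1) - x j)) =
      ((L : ℂ) + 1) * ∫ y : Fin L → ℝ,
        (∫ t : ℝ, ∏ j : Fin (L + 1),
            f ((Fin.snoc y (-(∑ i : Fin L, y i)) : Fin (L + 1) → ℝ) j + t)) *
          ∏ j : Fin (L + 1),
            G ((Fin.snoc y (-(∑ i : Fin L, y i)) : Fin (L + 1) → ℝ) (j + 1) -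
               (Fin.snoc y (-(∑ i : Fin L, y i)) : Fin (L + 1) → ℝ) j) := by
  obtain ⟨M, hM⟩ := hGbd
  set f' := hf.1.mk f with hf'def
  have hf'm : StronglyMeasurable f' := hf.1.stronglyMeasurable_mk
  have hff' : f =ᵐ[volume] f' := hf.1.ae_eq_mk
  have hf' : Integrable f' (volume : Measure ℝ) := hf.congr hff'
  have hLHS : (∫ x : Fin (L + 1) → ℝ, ∏ j : Fin (L + 1), f (x j) * G (x (j + 1) - x j)) =
      ∫ x : Fin (L + 1) → ℝ, ∏ j : Fin (L + 1), f' (x j) * G (x (j + 1) - x j) := by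
    apply integral_congr_ae
    have hj : ∀ j : Fin (L+1), ∀ᵐ x : Fin (L+1) → ℝ, f (x j) = f' (x j) := by
      intro j
      have ht : Filter.Tendsto (Function.eval j)
          (ae (volume : Measure (Fin (L+1) → ℝ))) (ae (volume : Measure ℝ)) := by
        rw [volume_pi]
        exact MeasureTheory.Measure.tendsto_eval_ae_ae
      exact ht.eventually hff'
    filter_upwards [ae_all_iff.2 hj] with x hx
    exact Finset.prod_congr rfl fun j _ => by rw [hx j]
  have hinner : ∀ y : Fin L → ℝ,
      (∫ t : ℝ, ∏ j : Fin (L + 1),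
          f ((Fin.snoc y (-(∑ i : Fin L, y i)) : Fin (L + 1) → ℝ) j + t)) =
      ∫ t : ℝ, ∏ j : Fin (L + 1),
          f' ((Fin.snoc y (-(∑ i : Fin L, y i)) : Fin (L + 1) → ℝ) j + t) := by
    intro y
    apply integral_congr_ae
    have hj : ∀ j : Fin (L+1), ∀ᵐ t : ℝ,
        f ((Fin.snoc y (-(∑ i : Fin L, y i)) : Fin (L + 1) → ℝ) j + t) =
        f' ((Fin.snoc y (-(∑ i : Fin L, y i)) : Fin (L + 1) → ℝ) j + t) := by
      intro j
      have hmp := measurePreserving_add_left (volume : Measure ℝ)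
        ((Fin.snoc y (-(∑ i : Fin L, y i)) : Fin (L + 1) → ℝ) j)
      exact hmp.quasiMeasurePreserving.tendsto_ae.eventually hff'
    filter_upwards [ae_all_iff.2 hj] with t ht
    exact Finset.prod_congr rfl fun j _ => ht j
  rw [hLHS, key L f' G hf'm hf' hG M hM]
  congr 1
  apply integral_congr_ae
  apply Filter.Eventually.of_forall
  intro y
  simp only []
  rw [hinner y]
end
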